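/- Let d ≥ 2, let e₀ be a fixed unit vector in ℂ^d, let s ∈ [1/2, 1], and let ψ₀, ψ₁ be unit vectors in ℂ^d satisfying |⟨e₀, ψ₀⟩|² ≥ s and |⟨e₀, ψ₁⟩|² ≥ s. Then for any positive-semidefinite operators M₀, M₁ on ℂ^d with M₀ + M₁ = I, the discrimination probability satisfies (1/2)(⟨ψ₀, M₀ψ₀⟩ + ⟨ψ₁, M₁ψ₁⟩) ≤ 1/2 + √(s(1−s)). -/

import Mathlib

open scoped ComplexInnerProductSpace
open ComplexConjugate

lemma pos_cs {d : ℕ} (M : EuclideanSpace ℂ (Fin d) →L[ℂ] EuclideanSpace ℂ (Fin d))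
    (hM : M.IsPositive) (x y : EuclideanSpace ℂ (Fin d)) :
    ‖⟪x, M y⟫‖ ^ 2 ≤ (⟪x, M x⟫).re * (⟪y, M y⟫).re := by
  have hsymm : ∀ u v : EuclideanSpace ℂ (Fin d), ⟪M u, v⟫ = ⟪u, M v⟫ := by
    have := hM.1
    exact fun u v => this u v
  set B := ⟪x, M y⟫ with hB
  set a := (⟪x, M x⟫).re with ha
  set b := (⟪y, M y⟫).re with hb
  have ha0 : 0 ≤ a := hM.re_inner_nonneg_right x
  have hb0 : 0 ≤ b := hM.re_inner_nonneg_right y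
  have key : ∀ r : ℝ, 0 ≤ a - 2 * r * ‖B‖ + r ^ 2 * b := by
    intro r
    by_cases hB0 : B = 0
    · simp [hB0]; nlinarith [sq_nonneg r]
    · have hBn : (‖B‖ : ℝ) ≠ 0 := norm_ne_zero_iff.mpr hB0
      set t : ℂ := (-(r / ‖B‖) : ℝ) * conj B with ht
      have hz := hM.re_inner_nonneg_right (x + t • y)
      have hexp : ⟪x + t • y, M (x + t • y)⟫
          = ⟪x, M x⟫ + t * B + conj t * conj B + conj t * t * ⟪y, M y⟫ := by
        have h1 : ⟪y, M x⟫ = conj B := by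
          rw [hB, ← hsymm x y, ← inner_conj_symm]
        simp [map_add, inner_add_left, inner_add_right, inner_smul_left, inner_smul_right,
          ContinuousLinearMap.map_smul, h1, ← hB]
        ring
      have hconj : (conj B) * B = ((‖B‖ : ℝ) : ℂ) ^ 2 := by
        rw [Complex.conj_mul']
      have hgen : ∀ c : ℝ, c ≠ 0 → (-(r / c)) * c ^ 2 = -(r * c) := by
        intro c hc; field_simp
      have hgen2 : ∀ c : ℝ, c ≠ 0 → (-(r / c)) ^ 2 * c ^ 2 = r ^ 2 := by
        intro c hc; field_simp
      have hr : (-(r / ‖B‖)) * ‖B‖ ^ 2 = -(r * ‖B‖) := hgen _ hBn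
      have htB : t * B = ((-(r * ‖B‖) : ℝ) : ℂ) := by
        rw [ht, mul_assoc, hconj, ← Complex.ofReal_pow, ← Complex.ofReal_mul, hr]
      have hcc : conj t * conj B = ((-(r * ‖B‖) : ℝ) : ℂ) := by
        rw [← map_mul, htB, Complex.conj_ofReal]
      have htt : conj t * t = ((r ^ 2 : ℝ) : ℂ) := by
        have h2 : conj t * t = ((-(r / ‖B‖) : ℝ) : ℂ) ^ 2 * (B * conj B) := by
          rw [ht]
          simp only [map_mul, Complex.conj_conj, Complex.conj_ofReal]
          ring
        rw [h2, mul_comm B, hconj, ← Complex.ofReal_pow, ← Complex.ofReal_pow,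
          ← Complex.ofReal_mul]
        exact congrArg _ (hgen2 _ hBn)
      rw [hexp, htB, hcc, htt] at hz
      simp only [RCLike.re_to_complex, Complex.add_re, Complex.ofReal_re,
        Complex.re_ofReal_mul] at hz
      rw [← ha, ← hb] at hz
      linarith
  by_cases hbz : b = 0
  · have hBz : ‖B‖ = 0 := by
      by_contra hne
      have hpos : 0 < ‖B‖ := lt_of_le_of_ne (norm_nonneg _) (Ne.symm hne)
      have hkk := key ((a + 1) / (2 * ‖B‖))
      rw [hbz, mul_zero] at hkk
      have hg' : ∀ c : ℝ, c ≠ 0 → 2 * ((a + 1) / (2 * c)) * c = a + 1 := by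
        intro c hc; field_simp
      have hg : 2 * ((a + 1) / (2 * ‖B‖)) * ‖B‖ = a + 1 := hg' _ hne
      nlinarith [hkk, hg]
    simp [hbz, hBz]
  · have hbpos : 0 < b := lt_of_le_of_ne hb0 (Ne.symm hbz)
    have hk := key (‖B‖ / b)
    have e' : ∀ c : ℝ, a - 2 * (c / b) * c + (c / b) ^ 2 * b = a - c ^ 2 / b := by
      intro c; field_simp; ring
    have e := e' ‖B‖
    rw [e] at hk
    have h3 : ‖B‖ ^ 2 / b ≤ a := by linarith
    calc ‖B‖ ^ 2 = (‖B‖ ^ 2 / b) * b := (div_mul_cancel₀ _ (ne_of_gt hbpos)).symm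
      _ ≤ a * b := by nlinarith

set_option maxHeartbeats 1000000 in
theorem energy_restricted_two_state_discrimination_bound
    (d : ℕ) (hd : 2 ≤ d)
    (e0 ψ0 ψ1 : EuclideanSpace ℂ (Fin d))
    (he0 : ‖e0‖ = 1) (hψ0 : ‖ψ0‖ = 1) (hψ1 : ‖ψ1‖ = 1)
    (s : ℝ) (hs : s ∈ Set.Icc (1 / 2 : ℝ) 1)
    (h0 : s ≤ ‖⟪e0, ψ0⟫‖ ^ 2) (h1 : s ≤ ‖⟪e0, ψ1⟫‖ ^ 2)
    (M0 M1 : EuclideanSpace ℂ (Fin d) →L[ℂ] EuclideanSpace ℂ (Fin d))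
    (hM0 : M0.IsPositive) (hM1 : M1.IsPositive) (hsum : M0 + M1 = 1) :
    (1 / 2) * ((⟪ψ0, M0 ψ0⟫).re + (⟪ψ1, M1 ψ1⟫).re) ≤
      1 / 2 + Real.sqrt (s * (1 - s)) := by
  obtain ⟨hs2, hs1⟩ := hs
  set a := (⟪ψ0, M0 ψ0⟫).re with ha
  set b := (⟪ψ1, M0 ψ1⟫).re with hb
  set a' := (⟪ψ0, M1 ψ0⟫).re with ha'
  set b' := (⟪ψ1, M1 ψ1⟫).re with hb'
  have ha0 : 0 ≤ a := hM0.re_inner_nonneg_right ψ0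
  have hb0 : 0 ≤ b := hM0.re_inner_nonneg_right ψ1
  have ha'0 : 0 ≤ a' := hM1.re_inner_nonneg_right ψ0
  have hb'0 : 0 ≤ b' := hM1.re_inner_nonneg_right ψ1
  have happ : ∀ v : EuclideanSpace ℂ (Fin d), M0 v + M1 v = v := by
    intro v
    rw [← ContinuousLinearMap.add_apply, hsum, ContinuousLinearMap.one_apply]
  have hsum0 : a + a' = 1 := by
    have h : ⟪ψ0, M0 ψ0⟫ + ⟪ψ0, M1 ψ0⟫ = ⟪ψ0, ψ0⟫ := by
      rw [← inner_add_right, happ ψ0]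
    have h2 : (⟪ψ0, ψ0⟫).re = 1 := by
      have := inner_self_eq_norm_sq (𝕜 := ℂ) ψ0
      rw [hψ0] at this; simpa using this
    have h3 := congrArg Complex.re h
    rw [Complex.add_re, h2] at h3
    exact h3
  have hsum1 : b + b' = 1 := by
    have h : ⟪ψ1, M0 ψ1⟫ + ⟪ψ1, M1 ψ1⟫ = ⟪ψ1, ψ1⟫ := by
      rw [← inner_add_right, happ ψ1]
    have h2 : (⟪ψ1, ψ1⟫).re = 1 := by
      have := inner_self_eq_norm_sq (𝕜 := ℂ) ψ1
      rw [hψ1] at this; simpa using this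
    have h3 := congrArg Complex.re h
    rw [Complex.add_re, h2] at h3
    exact h3
  set c := ‖⟪ψ0, ψ1⟫‖ with hc
  have hc0 : 0 ≤ c := norm_nonneg _
  -- upper bound on c via Cauchy-Schwarz for positive operators
  set p := Real.sqrt (a * b) with hp
  set q := Real.sqrt (a' * b') with hq
  have hcs0 : ‖⟪ψ0, M0 ψ1⟫‖ ≤ p := by
    have h := pos_cs M0 hM0 ψ0 ψ1
    have : ‖⟪ψ0, M0 ψ1⟫‖ = Real.sqrt (‖⟪ψ0, M0 ψ1⟫‖ ^ 2) :=
      (Real.sqrt_sq (norm_nonneg _)).symm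
    rw [this, hp]
    exact Real.sqrt_le_sqrt (by rw [← ha, ← hb] at h; exact h)
  have hcs1 : ‖⟪ψ0, M1 ψ1⟫‖ ≤ q := by
    have h := pos_cs M1 hM1 ψ0 ψ1
    have : ‖⟪ψ0, M1 ψ1⟫‖ = Real.sqrt (‖⟪ψ0, M1 ψ1⟫‖ ^ 2) :=
      (Real.sqrt_sq (norm_nonneg _)).symm
    rw [this, hq]
    exact Real.sqrt_le_sqrt (by rw [← ha', ← hb'] at h; exact h)
  have hcpq : c ≤ p + q := by
    have hsplit : ⟪ψ0, ψ1⟫ = ⟪ψ0, M0 ψ1⟫ + ⟪ψ0, M1 ψ1⟫ := by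
      rw [← inner_add_right, happ ψ1]
    calc c = ‖⟪ψ0, M0 ψ1⟫ + ⟪ψ0, M1 ψ1⟫‖ := by rw [hc, hsplit]
      _ ≤ ‖⟪ψ0, M0 ψ1⟫‖ + ‖⟪ψ0, M1 ψ1⟫‖ := norm_add_le _ _
      _ ≤ p + q := add_le_add hcs0 hcs1
  -- lower bound on c from the energy restriction
  have hclow : 2 * s - 1 ≤ c := by
    set c0 := ⟪e0, ψ0⟫ with hc0d
    set c1 := ⟪e0, ψ1⟫ with hc1d
    set r0 : EuclideanSpace ℂ (Fin d) := ψ0 - c0 • e0 with hr0d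
    set r1 : EuclideanSpace ℂ (Fin d) := ψ1 - c1 • e0 with hr1d
    have hee : ⟪e0, e0⟫ = 1 := by
      rw [inner_self_eq_norm_sq_to_K, he0]; norm_num
    have her0 : ⟪e0, r0⟫ = 0 := by
      simp only [hr0d, inner_sub_right, inner_smul_right, hee, mul_one]
      rw [← hc0d, sub_self]
    have her1 : ⟪e0, r1⟫ = 0 := by
      simp only [hr1d, inner_sub_right, inner_smul_right, hee, mul_one]
      rw [← hc1d, sub_self]
    have hsplit : ⟪ψ0, ψ1⟫ = (starRingEnd ℂ) c0 * c1 + ⟪r0, r1⟫ := by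
      have : ⟪r0, r1⟫ = ⟪ψ0, ψ1⟫ - c1 * ⟪ψ0, e0⟫ - (starRingEnd ℂ) c0 * ⟪e0, ψ1⟫
          + (starRingEnd ℂ) c0 * c1 * ⟪e0, e0⟫ := by
        simp only [hr0d, hr1d, inner_sub_left, inner_sub_right, inner_smul_left,
          inner_smul_right, ← hc0d, ← hc1d]
        ring
      rw [this, hee]
      have : ⟪ψ0, e0⟫ = (starRingEnd ℂ) c0 := by rw [hc0d, ← inner_conj_symm]
      rw [this, hc1d]
      ring
    have hnr : ∀ (ψ : EuclideanSpace ℂ (Fin d)) (cc : ℂ), ‖ψ‖ = 1 → ⟪e0, ψ - cc • e0⟫ = 0 →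
        ‖ψ - cc • e0‖ ^ 2 = 1 - ‖cc‖ ^ 2 := by
      intro ψ cc hψ hortho
      have horth2 : ⟪cc • e0, ψ - cc • e0⟫ = 0 := by
        rw [inner_smul_left, hortho, mul_zero]
      have := norm_add_sq_eq_norm_sq_add_norm_sq_of_inner_eq_zero _ _ horth2
      rw [add_sub_cancel, hψ] at this
      have hns : ‖cc • e0‖ = ‖cc‖ := by rw [norm_smul, he0, mul_one]
      rw [hns] at this
      nlinarith
    have hs0 : 0 ≤ s := by linarith
    have hcn0 : Real.sqrt s ≤ ‖c0‖ := by
      have := Real.sqrt_le_sqrt h0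
      rwa [Real.sqrt_sq (norm_nonneg _)] at this
    have hcn1 : Real.sqrt s ≤ ‖c1‖ := by
      have := Real.sqrt_le_sqrt h1
      rwa [Real.sqrt_sq (norm_nonneg _)] at this
    have hrn0 : ‖r0‖ ≤ Real.sqrt (1 - s) := by
      have h := hnr ψ0 c0 hψ0 her0
      have : ‖r0‖ = Real.sqrt (‖r0‖ ^ 2) := (Real.sqrt_sq (norm_nonneg _)).symm
      rw [this]
      apply Real.sqrt_le_sqrt
      rw [← hr0d] at h
      nlinarith [h0, norm_nonneg c0]
    have hrn1 : ‖r1‖ ≤ Real.sqrt (1 - s) := by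
      have h := hnr ψ1 c1 hψ1 her1
      have : ‖r1‖ = Real.sqrt (‖r1‖ ^ 2) := (Real.sqrt_sq (norm_nonneg _)).symm
      rw [this]
      apply Real.sqrt_le_sqrt
      rw [← hr1d] at h
      nlinarith [h1, norm_nonneg c1]
    have hlow1 : s ≤ ‖(starRingEnd ℂ) c0 * c1‖ := by
      rw [norm_mul, RCLike.norm_conj]
      calc s = Real.sqrt s * Real.sqrt s := (Real.mul_self_sqrt hs0).symm
        _ ≤ ‖c0‖ * ‖c1‖ := by
            apply mul_le_mul hcn0 hcn1 (Real.sqrt_nonneg _)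
            exact norm_nonneg _
  -- done below
    have hup1 : ‖⟪r0, r1⟫‖ ≤ 1 - s := by
      calc ‖⟪r0, r1⟫‖ ≤ ‖r0‖ * ‖r1‖ := norm_inner_le_norm _ _
        _ ≤ Real.sqrt (1 - s) * Real.sqrt (1 - s) := by
            apply mul_le_mul hrn0 hrn1 (norm_nonneg _) (Real.sqrt_nonneg _)
        _ = 1 - s := Real.mul_self_sqrt (by linarith)
    have htri : ‖(starRingEnd ℂ) c0 * c1‖ - ‖⟪r0, r1⟫‖ ≤ c := by
      have h := norm_add_le ((starRingEnd ℂ) c0 * c1 + ⟪r0, r1⟫) (-⟪r0, r1⟫)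
      simp only [add_neg_cancel_right, norm_neg] at h
      rw [hc, hsplit]
      linarith
    linarith
  have ha1 : a ≤ 1 := by linarith
  have hb1 : b ≤ 1 := by linarith
  have he1 : a' = 1 - a := by linarith
  have he2 : b' = 1 - b := by linarith
  have hp2 : p ^ 2 = a * b := by rw [hp]; exact Real.sq_sqrt (by positivity)
  have hq2 : q ^ 2 = a' * b' := by rw [hq]; exact Real.sq_sqrt (by nlinarith)
  have hp0 : 0 ≤ p := by rw [hp]; positivity
  have hq0 : 0 ≤ q := by rw [hq]; exact Real.sqrt_nonneg _
  set u := Real.sqrt (a * (1 - a)) with hu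
  set v := Real.sqrt (b * (1 - b)) with hv
  have hu2 : u ^ 2 = a * (1 - a) := by rw [hu]; exact Real.sq_sqrt (by nlinarith)
  have hv2 : v ^ 2 = b * (1 - b) := by rw [hv]; exact Real.sq_sqrt (by nlinarith)
  have hpq : p * q = u * v := by
    rw [hp, hq, hu, hv, ← Real.sqrt_mul (by positivity), ← Real.sqrt_mul (by nlinarith)]
    congr 1
    rw [he1, he2]; ring
  set t := Real.sqrt (s * (1 - s)) with htd
  have ht0 : 0 ≤ t := Real.sqrt_nonneg _
  have ht2 : t ^ 2 = s * (1 - s) := by rw [htd]; exact Real.sq_sqrt (by nlinarith)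
  rw [he2]
  clear_value a b a' b' c p q u v t
  clear ha hb ha' hb' hc hp hq hu hv htd
  -- now pure real arithmetic
  have hq2' : q ^ 2 = (1 - a) * (1 - b) := by rw [hq2, he1, he2]
  have hcsq : c ^ 2 ≤ (p + q) ^ 2 := by
    have h := mul_self_le_mul_self hc0 hcpq
    rw [pow_two, pow_two]; exact h
  have hkey : (a - b) ^ 2 + (p + q) ^ 2 = 1 - (u - v) ^ 2 := by
    linear_combination hp2 + hq2' + 2 * hpq + hu2 + hv2
  have halg : (a - b) ^ 2 ≤ 1 - c ^ 2 := by
    linarith [hkey, hcsq, sq_nonneg (u - v)]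
  have hclow2 : (2 * s - 1) ^ 2 ≤ c ^ 2 := by
    have h2s : 0 ≤ 2 * s - 1 := by linarith
    have h := mul_self_le_mul_self h2s hclow
    rw [pow_two, pow_two]; exact h
  have hexp : (2 * s - 1) ^ 2 = 1 - 4 * (s * (1 - s)) := by ring
  have hsq : (a - b) ^ 2 ≤ (2 * t) ^ 2 := by
    have h4 : (2 * t) ^ 2 = 4 * (s * (1 - s)) := by
      rw [mul_pow, ht2]; ring
    linarith [halg, hclow2]
  have hfin : a - b ≤ 2 * t := by
    have h := Real.sqrt_le_sqrt hsq
    rw [Real.sqrt_sq_eq_abs, Real.sqrt_sq (by positivity)] at h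
    calc a - b ≤ |a - b| := le_abs_self _
      _ ≤ 2 * t := h
  linarith
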